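/- In one-step fraction-free Gaussian elimination applied to an n×n matrix whose entries are polynomials in ℚ[x₁,...,x_k] of total degree at most d, after m elimination steps every entry a^{(m)}_{i,j} is a polynomial of total degree at most (m+1)·d. -/

import Mathlib

open MvPolynomial

/-- The entries produced by Bareiss' one-step fraction-free Gaussian elimination,
computed in a field: `a⁽⁰⁾ᵢⱼ = Aᵢⱼ`, and
`a⁽ᵐ⁺¹⁾ᵢⱼ = (a⁽ᵐ⁾ₘₘ·a⁽ᵐ⁾ᵢⱼ − a⁽ᵐ⁾ᵢₘ·a⁽ᵐ⁾ₘⱼ) / a⁽ᵐ⁻¹⁾ₘ₋₁,ₘ₋₁` (with divisor `1` for `m = 0`). -/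
noncomputable def bareiss {K : Type*} [Field K] (A : ℕ → ℕ → K) : ℕ → ℕ → ℕ → K
  | 0, i, j => A i j
  | m + 1, i, j =>
      (bareiss A m m m * bareiss A m i j - bareiss A m i m * bareiss A m m j) /
        (if m = 0 then 1 else bareiss A (m - 1) (m - 1) (m - 1))

/-- Bordered submatrix: rows `0,…,m-1, i`, columns `0,…,m-1, j`. -/
noncomputable def bareissBrd {R : Type*} (A : ℕ → ℕ → R) (m i j : ℕ) :
    Matrix (Fin (m + 1)) (Fin (m + 1)) R :=
  Matrix.of fun r c => A (if (r : ℕ) = m then i else (r : ℕ)) (if (c : ℕ) = m then j else (c : ℕ))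

/-- Determinant of the bordered submatrix. -/
noncomputable def bareissPdet {R : Type*} [CommRing R] (A : ℕ → ℕ → R) (m i j : ℕ) : R :=
  (bareissBrd A m i j).det

lemma bareissPdet_zero {R : Type*} [CommRing R] (A : ℕ → ℕ → R) (i j : ℕ) :
    bareissPdet A 0 i j = A i j := by
  simp [bareissPdet, bareissBrd, Matrix.det_fin_one]

lemma bareissPdet_leading {R : Type*} [CommRing R] (A : ℕ → ℕ → R) (t : ℕ) :
    bareissPdet A t t t = (Matrix.of fun a b : Fin (t + 1) => A a b).det := by
  unfold bareissPdet bareissBrd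
  congr 1
  ext a b
  simp only [Matrix.of_apply]
  congr 1 <;> split <;> omega

lemma bareissBrd_eq_fromBlocks {R : Type*} (A : ℕ → ℕ → R) (m r c : ℕ) :
    bareissBrd A m r c =
      (Matrix.fromBlocks (Matrix.of fun (a b : Fin m) => A a b)
        (Matrix.of fun (a : Fin m) (_ : Fin 1) => A a c)
        (Matrix.of fun (_ : Fin 1) (b : Fin m) => A r b)
        (Matrix.of fun (_ _ : Fin 1) => A r c)).submatrix
        finSumFinEquiv.symm finSumFinEquiv.symm := by
  ext s t
  rcases h1 : ((finSumFinEquiv.symm s : Fin m ⊕ Fin 1)) with a | a <;>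
  rcases h2 : ((finSumFinEquiv.symm t : Fin m ⊕ Fin 1)) with b | b <;>
  rw [Equiv.symm_apply_eq] at h1 h2 <;> subst h1 <;> subst h2 <;>
  · have ha := a.isLt
    have hb := b.isLt
    simp [bareissBrd, Matrix.submatrix_apply]
    try (congr 1 <;> split <;> try split)
    all_goals first | rfl | omega

lemma bareissBrd_eq_fromBlocks₂ {R : Type*} (A : ℕ → ℕ → R) (m i j : ℕ) :
    bareissBrd A (m + 1) i j =
      (Matrix.fromBlocks (Matrix.of fun (a b : Fin m) => A a b)
        (Matrix.of fun (a : Fin m) (b : Fin 2) => A a (if (b : ℕ) = 1 then j else m))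
        (Matrix.of fun (a : Fin 2) (b : Fin m) => A (if (a : ℕ) = 1 then i else m) b)
        (Matrix.of fun (a b : Fin 2) =>
          A (if (a : ℕ) = 1 then i else m) (if (b : ℕ) = 1 then j else m))).submatrix
        finSumFinEquiv.symm finSumFinEquiv.symm := by
  ext s t
  rcases h1 : ((finSumFinEquiv.symm s : Fin m ⊕ Fin 2)) with a | a <;>
  rcases h2 : ((finSumFinEquiv.symm t : Fin m ⊕ Fin 2)) with b | b <;>
  rw [Equiv.symm_apply_eq] at h1 h2 <;> subst h1 <;> subst h2 <;>
  · have ha := a.isLt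
    have hb := b.isLt
    simp [bareissBrd, Matrix.submatrix_apply]
    try (congr 1 <;> split <;> try split)
    all_goals first | rfl | omega

section Key

variable {K : Type*} [Field K]

/-- 1×1 Schur-complement formula for the bordered minors. -/
lemma bareissPdet_schur (A : ℕ → ℕ → K) (m : ℕ)
    (h : (Matrix.of fun a b : Fin m => A a b).det ≠ 0) (r c : ℕ) :
    bareissPdet A m r c =
      (Matrix.of fun a b : Fin m => A a b).det *
        (A r c - ((Matrix.of fun (_ : Fin 1) (b : Fin m) => A r b) *
            (Matrix.of fun a b : Fin m => A a b)⁻¹ *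
            (Matrix.of fun (a : Fin m) (_ : Fin 1) => A a c)) 0 0) := by
  haveI : Invertible (Matrix.of fun a b : Fin m => A a b) :=
    Matrix.invertibleOfIsUnitDet _ (isUnit_iff_ne_zero.mpr h)
  rw [bareissPdet, bareissBrd_eq_fromBlocks, Matrix.det_submatrix_equiv_self,
    Matrix.det_fromBlocks₁₁, Matrix.invOf_eq_nonsing_inv]
  congr 1
  rw [Matrix.det_fin_one]
  simp [Matrix.sub_apply]

/-- The Sylvester-type identity satisfied by the bordered minors. -/
lemma bareissPdet_sylvester (A : ℕ → ℕ → K) (m i j : ℕ)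
    (h : (Matrix.of fun a b : Fin m => A a b).det ≠ 0) :
    (Matrix.of fun a b : Fin m => A a b).det * bareissPdet A (m + 1) i j =
      bareissPdet A m m m * bareissPdet A m i j -
        bareissPdet A m i m * bareissPdet A m m j := by
  haveI : Invertible (Matrix.of fun a b : Fin m => A a b) :=
    Matrix.invertibleOfIsUnitDet _ (isUnit_iff_ne_zero.mpr h)
  set Ab := (Matrix.of fun a b : Fin m => A a b) with hAbdef
  -- abbreviations for Schur complement entries
  set s : ℕ → ℕ → K := fun r c =>
    A r c - ((Matrix.of fun (_ : Fin 1) (b : Fin m) => A r b) * Ab⁻¹ *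
      (Matrix.of fun (a : Fin m) (_ : Fin 1) => A a c)) 0 0 with hs
  have h2 : bareissPdet A (m + 1) i j = Ab.det * (s m m * s i j - s i m * s m j) := by
    rw [bareissPdet, bareissBrd_eq_fromBlocks₂, Matrix.det_submatrix_equiv_self,
      Matrix.det_fromBlocks₁₁, Matrix.invOf_eq_nonsing_inv]
    congr 1
    rw [Matrix.det_fin_two]
    have key : ∀ a b : Fin 2,
        (((Matrix.of fun (a : Fin 2) (b : Fin m) => A (if (a : ℕ) = 1 then i else m) b) * Ab⁻¹ *
          (Matrix.of fun (a : Fin m) (b : Fin 2) => A a (if (b : ℕ) = 1 then j else m))) a b)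
        = ((Matrix.of fun (_ : Fin 1) (b : Fin m) =>
              A (if (a : ℕ) = 1 then i else m) b) * Ab⁻¹ *
            (Matrix.of fun (c : Fin m) (_ : Fin 1) =>
              A c (if (b : ℕ) = 1 then j else m))) 0 0 := by
      intro a b
      simp [Matrix.mul_apply]
    rw [← hAbdef]
    simp only [Matrix.sub_apply, Matrix.of_apply, key, hs]
    norm_num
    ring
  have e1 := bareissPdet_schur A m h m m
  have e2 := bareissPdet_schur A m h i j
  have e3 := bareissPdet_schur A m h i m
  have e4 := bareissPdet_schur A m h m j
  rw [← hAbdef] at e1 e2 e3 e4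
  rw [h2, e1, e2, e3, e4]
  simp only [hs]
  ring

/-- The Bareiss entries agree with the bordered minors. -/
lemma bareiss_eq_bareissPdet (A : ℕ → ℕ → K) (hpiv : ∀ m, bareiss A m m m ≠ 0) :
    ∀ m i j, bareiss A m i j = bareissPdet A m i j := by
  intro m
  induction m using Nat.strong_induction_on with
  | _ m ih =>
    match m with
    | 0 => intro i j; rw [bareissPdet_zero]; simp [bareiss]
    | m + 1 =>
      intro i j
      have hAb : (Matrix.of fun a b : Fin m => A a b).det ≠ 0 := by
        match m with
        | 0 => simp [Matrix.det_fin_zero]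
        | t + 1 =>
          have : (Matrix.of fun a b : Fin (t + 1) => A a b).det = bareiss A t t t := by
            rw [← bareissPdet_leading, ← ih t (by omega) t t]
          rw [this]; exact hpiv t
      have hdiv : (if m = 0 then 1 else bareiss A (m - 1) (m - 1) (m - 1))
          = (Matrix.of fun a b : Fin m => A a b).det := by
        match m with
        | 0 => simp [Matrix.det_fin_zero]
        | t + 1 =>
          simp only [Nat.add_sub_cancel, Nat.succ_ne_zero, if_false]
          rw [ih t (by omega) t t, bareissPdet_leading]
      rw [show bareiss A (m + 1) i j =
          (bareiss A m m m * bareiss A m i j - bareiss A m i m * bareiss A m m j) /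
          (if m = 0 then 1 else bareiss A (m - 1) (m - 1) (m - 1)) by simp [bareiss]]
      rw [hdiv, ih m (by omega) m m, ih m (by omega) i j, ih m (by omega) i m,
        ih m (by omega) m j, ← bareissPdet_sylvester A m i j hAb,
        mul_div_cancel_left₀ _ hAb]

end Key

lemma bareissPdet_map {R S : Type*} [CommRing R] [CommRing S] (f : R →+* S)
    (A : ℕ → ℕ → R) (m i j : ℕ) :
    bareissPdet (fun i j => f (A i j)) m i j = f (bareissPdet A m i j) := by
  unfold bareissPdet
  rw [RingHom.map_det]
  rfl

lemma bareissPdet_totalDegree {k d : ℕ} (A : ℕ → ℕ → MvPolynomial (Fin k) ℚ)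
    (hd : ∀ i j, (A i j).totalDegree ≤ d) (m i j : ℕ) :
    (bareissPdet A m i j).totalDegree ≤ (m + 1) * d := by
  rw [bareissPdet, Matrix.det_apply]
  refine le_trans (totalDegree_finset_sum _ _) ?_
  apply Finset.sup_le
  intro σ _
  have hsmul : (Equiv.Perm.sign σ • ∏ r, bareissBrd A m i j (σ r) r).totalDegree
      = (∏ r, bareissBrd A m i j (σ r) r).totalDegree := by
    rcases Int.units_eq_one_or (Equiv.Perm.sign σ) with h | h <;>
      simp [h, totalDegree_neg]
  rw [hsmul]
  refine le_trans (totalDegree_finset_prod _ _) ?_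
  have : ∀ r : Fin (m + 1), (bareissBrd A m i j (σ r) r).totalDegree ≤ d := by
    intro r; exact hd _ _
  calc ∑ r : Fin (m + 1), (bareissBrd A m i j (σ r) r).totalDegree
      ≤ ∑ _r : Fin (m + 1), d := Finset.sum_le_sum fun r _ => this r
    _ = (m + 1) * d := by simp [Finset.sum_const, mul_comm]

/-- In one-step fraction-free Gaussian elimination applied to a matrix
whose entries are polynomials in `ℚ[x₁,…,x_k]` of total degree at most `d`, after `m`
elimination steps every entry `a⁽ᵐ⁾ᵢⱼ` is a polynomial of total degree at most `(m+1)·d`. -/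
theorem bareiss_totalDegree_le (k d : ℕ) (A : ℕ → ℕ → MvPolynomial (Fin k) ℚ)
    (hd : ∀ i j, (A i j).totalDegree ≤ d)
    (hpiv : ∀ m, bareiss (fun i j =>
        algebraMap (MvPolynomial (Fin k) ℚ) (FractionRing (MvPolynomial (Fin k) ℚ)) (A i j))
        m m m ≠ 0) :
    ∀ m i j, m ≤ i → m ≤ j →
      ∃ p : MvPolynomial (Fin k) ℚ,
        bareiss (fun i j =>
            algebraMap (MvPolynomial (Fin k) ℚ) (FractionRing (MvPolynomial (Fin k) ℚ)) (A i j))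
            m i j
          = algebraMap (MvPolynomial (Fin k) ℚ) (FractionRing (MvPolynomial (Fin k) ℚ)) p ∧
        p.totalDegree ≤ (m + 1) * d := by
  intro m i j _ _
  refine ⟨bareissPdet A m i j, ?_, bareissPdet_totalDegree A hd m i j⟩
  rw [bareiss_eq_bareissPdet _ hpiv m i j,
    ← bareissPdet_map ((algebraMap (MvPolynomial (Fin k) ℚ)
      (FractionRing (MvPolynomial (Fin k) ℚ))) : _ →+* _) A m i j]
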